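/- Let δ > 0 and i ∈ ℤ, and for k ∈ ℕ define f_k ∈ L²((−1/2,1/2)) by f_k(ξ) = e^{−kδξ²}·e^{2πi·i·ξ}. Then (f_k)_{k∈ℕ} is not a Bessel sequence in L²((−1/2,1/2)): for every C > 0 there exists g ∈ L²((−1/2,1/2)) with ∑_{k∈ℕ} |⟨g, f_k⟩|² > C‖g‖². -/

import Mathlib

open MeasureTheory Real

/-- The sequence arising in dynamical sampling for the heat equation:
`f_k(ξ) = e^{-kδξ²} · e^{2πi·i·ξ}` on `(-1/2, 1/2)`. -/
noncomputable def heatSeq (δ : ℝ) (i : ℤ) (k : ℕ) (ξ : ℝ) : ℂ :=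
  (Real.exp (-(k * δ * ξ ^ 2)) : ℂ) *
    Complex.exp (2 * Real.pi * Complex.I * (i : ℂ) * (ξ : ℂ))

lemma J_lb (δ : ℝ) (hδ : 0 < δ) (k : ℕ) :
    4 * Real.exp (-1) ^ 2 * min (1/4) (1/δ) * (1/((k:ℝ)+1)) ≤
      (∫ ξ in Set.Ioo (-(1:ℝ)/2) (1/2), Real.exp (-(k*δ*ξ^2))) ^ 2 := by
  set s : ℝ := Real.sqrt (((k:ℝ)+1)*δ) with hs
  have hkpos : (0:ℝ) < (k:ℝ)+1 := by positivity
  have hspos : 0 < s := Real.sqrt_pos.2 (by positivity)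
  have hs2 : s^2 = ((k:ℝ)+1)*δ := Real.sq_sqrt (by positivity)
  set a : ℝ := min (1/2) s⁻¹ with ha
  have hapos : 0 < a := lt_min (by norm_num) (by positivity)
  have hale : a ≤ 1/2 := min_le_left _ _
  have hasq : a^2 ≤ (((k:ℝ)+1)*δ)⁻¹ := by
    have h1 : a ≤ s⁻¹ := min_le_right _ _
    have := mul_self_le_mul_self hapos.le h1
    calc a^2 = a*a := sq a
    _ ≤ s⁻¹ * s⁻¹ := this
    _ = (s^2)⁻¹ := by rw [sq]; rw [mul_inv]
    _ = (((k:ℝ)+1)*δ)⁻¹ := by rw [hs2]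
  -- integrability
  have hcont : Continuous fun ξ : ℝ => Real.exp (-((k:ℝ)*δ*ξ^2)) := by fun_prop
  have hint : IntegrableOn (fun ξ : ℝ => Real.exp (-((k:ℝ)*δ*ξ^2))) (Set.Ioo (-(1:ℝ)/2) (1/2)) volume :=
    (hcont.integrableOn_Icc (a := -(1:ℝ)/2) (b := 1/2)).mono_set Set.Ioo_subset_Icc_self
  have hinta : IntegrableOn (fun ξ : ℝ => Real.exp (-((k:ℝ)*δ*ξ^2))) (Set.Ioo (-a) a) volume :=
    hint.mono_set (by
      apply Set.Ioo_subset_Ioo <;> linarith)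
  -- step 1: constant bound on small interval
  have step1 : 2*a*Real.exp (-1) ≤ ∫ ξ in Set.Ioo (-a) a, Real.exp (-((k:ℝ)*δ*ξ^2)) := by
    have hc : ∫ _ in Set.Ioo (-a) a, Real.exp (-1) = 2*a*Real.exp (-1) := by
      rw [setIntegral_const, measureReal_def, Real.volume_Ioo, ENNReal.toReal_ofReal (by linarith), smul_eq_mul]
      ring
    rw [← hc]
    apply setIntegral_mono_on (integrableOn_const (by simp [Real.volume_Ioo])) hinta measurableSet_Ioo
    intro ξ hξ
    apply Real.exp_le_exp.2
    have hx2 : ξ^2 ≤ a^2 := sq_le_sq' hξ.1.le hξ.2.le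
    have : (k:ℝ)*δ*ξ^2 ≤ 1 := by
      have h1 : (k:ℝ)*δ*ξ^2 ≤ (k:ℝ)*δ*(((k:ℝ)+1)*δ)⁻¹ := by
        apply mul_le_mul_of_nonneg_left (le_trans hx2 hasq) (by positivity)
      have h2 : (k:ℝ)*δ*(((k:ℝ)+1)*δ)⁻¹ = (k:ℝ)/((k:ℝ)+1) := by
        field_simp
      have h3 : (k:ℝ)/((k:ℝ)+1) ≤ 1 := by
        rw [div_le_one hkpos]; linarith
      linarith
    linarith
  -- step 2: monotone in set
  have step2 : (∫ ξ in Set.Ioo (-a) a, Real.exp (-((k:ℝ)*δ*ξ^2))) ≤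
      ∫ ξ in Set.Ioo (-(1:ℝ)/2) (1/2), Real.exp (-((k:ℝ)*δ*ξ^2)) := by
    apply setIntegral_mono_set hint
    · filter_upwards with x using Real.exp_nonneg _
    · filter_upwards with x hx
      exact Set.Ioo_subset_Ioo (by linarith) (by linarith) hx
  have hJ : 2*a*Real.exp (-1) ≤ ∫ ξ in Set.Ioo (-(1:ℝ)/2) (1/2), Real.exp (-((k:ℝ)*δ*ξ^2)) :=
    le_trans step1 step2
  -- squaring
  have hsq : (2*a*Real.exp (-1))^2 ≤ (∫ ξ in Set.Ioo (-(1:ℝ)/2) (1/2), Real.exp (-((k:ℝ)*δ*ξ^2)))^2 := by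
    apply pow_le_pow_left₀ (by positivity) hJ
  refine le_trans ?_ hsq
  -- 4 e² min(1/4,1/δ)/(k+1) ≤ 4 a² e²
  have ha2lb : min (1/4) (1/δ) * (1/((k:ℝ)+1)) ≤ a^2 := by
    rcases le_total (1/2 : ℝ) s⁻¹ with h | h
    · have haa : a = 1/2 := min_eq_left h
      have : min (1/4:ℝ) (1/δ) ≤ 1/4 := min_le_left _ _
      have h1 : 1/((k:ℝ)+1) ≤ 1 := by
        rw [div_le_one hkpos]; linarith
      have hmnn : (0:ℝ) ≤ min (1/4) (1/δ) := le_min (by norm_num) (by positivity)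
      calc min (1/4:ℝ) (1/δ) * (1/((k:ℝ)+1)) ≤ (1/4) * 1 :=
            mul_le_mul this h1 (by positivity) (by norm_num)
      _ = a^2 := by rw [haa]; norm_num
    · have haa : a = s⁻¹ := min_eq_right h
      have ha2 : a^2 = (1/δ) * (1/((k:ℝ)+1)) := by
        rw [haa, inv_pow, hs2]
        field_simp
      rw [ha2]
      apply mul_le_mul_of_nonneg_right (min_le_right _ _) (by positivity)
  calc 4 * Real.exp (-1) ^ 2 * min (1/4) (1/δ) * (1/((k:ℝ)+1))
      = (4 * Real.exp (-1)^2) * (min (1/4) (1/δ) * (1/((k:ℝ)+1))) := by ring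
    _ ≤ (4 * Real.exp (-1)^2) * a^2 := by
        apply mul_le_mul_of_nonneg_left ha2lb (by positivity)
    _ = (2*a*Real.exp (-1))^2 := by ring

/-- `(f_k)_{k∈ℕ}` is not a Bessel sequence in `L²(-1/2, 1/2)`: for every `C > 0` there is
`g ∈ L²(-1/2, 1/2)` with `∑_k |⟨g, f_k⟩|² > C‖g‖²` (witnessed by a finite partial sum). -/
theorem stmt_19 (δ : ℝ) (hδ : 0 < δ) (i : ℤ) :
    ∀ C > 0, ∃ g : ℝ → ℂ,
      MemLp g 2 (volume.restrict (Set.Ioo (-(1 : ℝ) / 2) (1 / 2))) ∧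
      ∃ F : Finset ℕ,
        C * ∫ ξ in Set.Ioo (-(1 : ℝ) / 2) (1 / 2), ‖g ξ‖ ^ 2 <
          ∑ k ∈ F, ‖∫ ξ in Set.Ioo (-(1 : ℝ) / 2) (1 / 2),
            g ξ * (starRingEnd ℂ) (heatSeq δ i k ξ)‖ ^ 2 := by
  intro C hC
  set g : ℝ → ℂ := fun ξ => Complex.exp (2 * Real.pi * Complex.I * (i : ℂ) * (ξ : ℂ)) with hg
  have hnorm : ∀ ξ : ℝ, ‖g ξ‖ = 1 := by
    intro ξ
    rw [hg, Complex.norm_exp]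
    simp [Complex.mul_re, Complex.mul_im]
  have hvol : volume (Set.Ioo (-(1:ℝ)/2) (1/2)) = 1 := by
    rw [Real.volume_Ioo]; norm_num
  refine ⟨g, ?_, ?_⟩
  · haveI : Fact (volume (Set.Ioo (-(1:ℝ)/2) (1/2)) < ⊤) := ⟨by rw [hvol]; exact ENNReal.one_lt_top⟩
    exact MemLp.of_bound ((Complex.continuous_exp.comp (by fun_prop)).aestronglyMeasurable)
      (1 : ℝ) (by filter_upwards with ξ using le_of_eq (hnorm ξ))
  · -- the norm² integral equals 1
    have hnormint : ∫ ξ in Set.Ioo (-(1:ℝ)/2) (1/2), ‖g ξ‖ ^ 2 = 1 := by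
      simp only [hnorm, one_pow]
      rw [setIntegral_const, measureReal_def, hvol]; simp
    -- inner products
    have hinner : ∀ k : ℕ, (∫ ξ in Set.Ioo (-(1:ℝ)/2) (1/2),
        g ξ * (starRingEnd ℂ) (heatSeq δ i k ξ)) =
        ((∫ ξ in Set.Ioo (-(1:ℝ)/2) (1/2), Real.exp (-(k*δ*ξ^2)) : ℝ) : ℂ) := by
      intro k
      refine Eq.trans (setIntegral_congr_fun measurableSet_Ioo ?_) integral_ofReal
      intro ξ _
      show g ξ * (starRingEnd ℂ) (heatSeq δ i k ξ) = _
      unfold heatSeq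
      rw [hg, map_mul, Complex.conj_ofReal, ← Complex.exp_conj]
      have hcz : (starRingEnd ℂ) (2 * Real.pi * Complex.I * (i:ℂ) * (ξ:ℂ)) =
          -(2 * Real.pi * Complex.I * (i:ℂ) * (ξ:ℂ)) := by
        simp [map_mul, Complex.conj_ofReal, map_ofNat]
      rw [hcz, mul_comm ((Real.exp (-(k * δ * ξ ^ 2)) : ℂ)) _, ← mul_assoc, ← Complex.exp_add]
      simp
    -- choose N
    set c : ℝ := 4 * Real.exp (-1) ^ 2 * min (1/4) (1/δ) with hc
    have hcpos : 0 < c := by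
      have : (0:ℝ) < min (1/4) (1/δ) := lt_min (by norm_num) (by positivity)
      positivity
    have htend : Filter.Tendsto (fun n => ∑ k ∈ Finset.range n, 1/((k:ℝ)+1))
        Filter.atTop Filter.atTop := by
      have := Real.tendsto_sum_range_one_div_nat_succ_atTop
      simpa using this
    obtain ⟨N, hN⟩ := (htend.eventually_gt_atTop (C / c)).exists
    refine ⟨Finset.range N, ?_⟩
    rw [hnormint, mul_one]
    have key : c * ∑ k ∈ Finset.range N, 1/((k:ℝ)+1) ≤
        ∑ k ∈ Finset.range N, ‖∫ ξ in Set.Ioo (-(1:ℝ)/2) (1/2),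
          g ξ * (starRingEnd ℂ) (heatSeq δ i k ξ)‖ ^ 2 := by
      rw [Finset.mul_sum]
      apply Finset.sum_le_sum
      intro k _
      rw [hinner k, Complex.norm_real, Real.norm_eq_abs, sq_abs]
      exact J_lb δ hδ k
    have hClt : C < c * ∑ k ∈ Finset.range N, 1/((k:ℝ)+1) := by
      rw [← div_lt_iff₀' hcpos]
      exact hN
    linarith
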